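/- Let T ⊂ ℝ² be a triangle with vertices A₁, A₂, A₃ split by a segment DE (D on edge A₂A₃, E on edge A₁A₃) into two subregions, and let β⁺_c, β⁻_c > 0. For any prescribed edge averages N₁, N₂, N₃, there exists a unique piecewise linear function φ (linear on each subregion) that is continuous across DE, satisfies β⁺_c ∇φ⁺·n_h = β⁻_c ∇φ⁻·n_h where n_h is the unit normal of DE, and has average Nᵢ over edge eᵢ for i = 1,2,3. -/

import Mathlib

open scoped InnerProductSpace

section stmt13helpers

local notation "E2" => EuclideanSpace ℝ (Fin 2)

lemma stmt13_aux_exist (k₁ k₂ βp βm x y m n N₁ N₂ N₃ : ℝ)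
    (hk₁0 : 0 < k₁) (hk₁1 : k₁ < 1) (hk₂0 : 0 < k₂) (hk₂1 : k₂ < 1)
    (hβp : 0 < βp) (hβm : 0 < βm)
    (hmn : k₁ * m = k₂ * n) (hxy : x * n + y * m = 1) :
    ∃ a₁ a₂ a₃ b₁ b₂ b₃ : ℝ,
      a₃ + k₁*(a₂-a₃) = b₃ + k₁*(b₂-b₃) ∧
      a₃ + k₂*(a₁-a₃) = b₃ + k₂*(b₁-b₃) ∧
      βp*(x*(a₁-a₃)+y*(a₂-a₃)) = βm*(x*(b₁-b₃)+y*(b₂-b₃)) ∧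
      a₃ + (a₂-a₃)/2 + k₁*(b₃-a₃) + k₁^2*((b₂-b₃)-(a₂-a₃))/2 = N₁ ∧
      a₃ + (a₁-a₃)/2 + k₂*(b₃-a₃) + k₂^2*((b₁-b₃)-(a₁-a₃))/2 = N₂ ∧
      a₁ + (a₂-a₁)/2 = N₃ := by
  have hkk : k₁ * k₂ < 1 := by
    have h := mul_lt_mul'' hk₁1 hk₂1 hk₁0.le hk₂0.le
    simpa using h
  have hd : (0:ℝ) < βm + (βp - βm) * (k₁*k₂) := by
    have hrw : βm + (βp - βm) * (k₁*k₂) = βm*(1-k₁*k₂) + βp*(k₁*k₂) := by ring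
    rw [hrw]
    exact add_pos (mul_pos hβm (by linarith)) (mul_pos hβp (mul_pos hk₁0 hk₂0))
  set T₀ : ℝ := 2*x*(N₃-N₁) + 2*y*(N₃-N₂) with hT
  obtain ⟨c, hceq⟩ : ∃ c : ℝ, c * (βm + (βp - βm) * (k₁*k₂)) = (βp - βm) * T₀ :=
    ⟨(βp - βm) * T₀ / (βm + (βp - βm) * (k₁*k₂)), div_mul_cancel₀ _ hd.ne'⟩
  refine ⟨N₂+N₃-N₁ + c*(n*k₂^2 - m*k₁^2)/2,
          N₁+N₃-N₂ + c*(m*k₁^2 - n*k₂^2)/2,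
          N₁+N₂-N₃ + c*(m*k₁^2 + n*k₂^2)/2,
          N₂+N₃-N₁ + c*(n*k₂^2 - m*k₁^2)/2 + c*(1-k₂)*n,
          N₁+N₃-N₂ + c*(m*k₁^2 - n*k₂^2)/2 + c*(1-k₁)*m,
          N₁+N₂-N₃ + c*(m*k₁^2 + n*k₂^2)/2 - c*k₁*m, ?_, ?_, ?_, ?_, ?_, ?_⟩
  · ring
  · linear_combination (c*(1-k₂)) * hmn
  · linear_combination (-1 : ℝ) * hceq - c*((βp-βm)*(k₁*k₂)+βm) * hxy
      - ((βp-βm)*c*(x*k₁-y*k₂) + x*c*βm) * hmn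
  · ring
  · linear_combination c*(k₂^2/2 - k₂) * hmn
  · ring

lemma stmt13_aux_unique (k₁ k₂ βp βm x y m n a₁ a₂ a₃ b₁ b₂ b₃ : ℝ)
    (hk₁0 : 0 < k₁) (hk₁1 : k₁ < 1) (hk₂0 : 0 < k₂) (hk₂1 : k₂ < 1)
    (hβp : 0 < βp) (hβm : 0 < βm)
    (hmn : k₁ * m = k₂ * n) (hxy : x * n + y * m = 1)
    (h1 : a₃ + k₁*(a₂-a₃) = b₃ + k₁*(b₂-b₃))
    (h2 : a₃ + k₂*(a₁-a₃) = b₃ + k₂*(b₁-b₃))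
    (h3 : βp*(x*(a₁-a₃)+y*(a₂-a₃)) = βm*(x*(b₁-b₃)+y*(b₂-b₃)))
    (h4 : a₃ + (a₂-a₃)/2 + k₁*(b₃-a₃) + k₁^2*((b₂-b₃)-(a₂-a₃))/2 = 0)
    (h5 : a₃ + (a₁-a₃)/2 + k₂*(b₃-a₃) + k₂^2*((b₁-b₃)-(a₁-a₃))/2 = 0)
    (h6 : a₁ + (a₂-a₁)/2 = 0) :
    a₁ = 0 ∧ a₂ = 0 ∧ a₃ = 0 ∧ b₁ = 0 ∧ b₂ = 0 ∧ b₃ = 0 := by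
  have hn0 : n ≠ 0 := by
    intro h0
    have hm0 : m = 0 := by
      have : k₁ * m = 0 := by rw [hmn, h0, mul_zero]
      exact (mul_eq_zero.mp this).resolve_left (ne_of_gt hk₁0)
    rw [h0, hm0] at hxy; simp at hxy
  obtain ⟨c, hc1⟩ : ∃ c : ℝ, b₁ - a₁ - (b₃ - a₃) = c * n :=
    ⟨(b₁ - a₁ - (b₃ - a₃))/n, by field_simp⟩
  have hkey : k₂ * (m * (b₁ - a₁ - (b₃ - a₃))) = k₂ * (n * (b₂ - a₂ - (b₃ - a₃))) := by
    linear_combination m*h1 - m*h2 + (b₂ - a₂ - (b₃ - a₃))*hmn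
  have hkey' : m * (b₁ - a₁ - (b₃ - a₃)) = n * (b₂ - a₂ - (b₃ - a₃)) :=
    mul_left_cancel₀ (ne_of_gt hk₂0) hkey
  have hc2 : b₂ - a₂ - (b₃ - a₃) = c * m := by
    have h : n * (b₂ - a₂ - (b₃ - a₃)) = n * (c * m) := by
      linear_combination -hkey' + m*hc1
    exact mul_left_cancel₀ hn0 h
  have hu3 : b₃ - a₃ = -(k₂*(c*n)) := by linear_combination -h2 - k₂*hc1
  have s1 : a₂ + a₃ = c*m*k₁^2 := by
    linear_combination 2*h4 - k₁^2*hc2 - 2*k₁*hu3 - 2*k₁*c*hmn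
  have s2 : a₁ + a₃ = c*n*k₂^2 := by
    linear_combination 2*h5 - k₂^2*hc1 - 2*k₂*hu3
  have s3 : a₁ + a₂ = 0 := by linear_combination 2*h6
  have ta : a₁ - a₃ = -(c*m*k₁^2) := by linear_combination s3 - s1
  have tb : a₂ - a₃ = -(c*n*k₂^2) := by linear_combination s3 - s2
  have tc : b₁ - b₃ = -(c*m*k₁^2) + c*n := by linear_combination ta + hc1
  have td : b₂ - b₃ = -(c*n*k₂^2) + c*m := by linear_combination tb + hc2
  have s4 : c * (βm + (βp-βm)*(k₁*k₂)) = 0 := by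
    linear_combination -h3 + βp*x*ta + βp*y*tb - βm*x*tc - βm*y*td
      - (βp-βm)*c*k₁*k₂*hxy - (βp-βm)*c*(x*k₁-y*k₂)*hmn - βm*c*hxy
  have hkk : k₁ * k₂ < 1 := by
    have h := mul_lt_mul'' hk₁1 hk₂1 hk₁0.le hk₂0.le
    simpa using h
  have hd : (0:ℝ) < βm + (βp - βm) * (k₁*k₂) := by
    have hrw : βm + (βp - βm) * (k₁*k₂) = βm*(1-k₁*k₂) + βp*(k₁*k₂) := by ring
    rw [hrw]
    exact add_pos (mul_pos hβm (by linarith)) (mul_pos hβp (mul_pos hk₁0 hk₂0))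
  have hc0 : c = 0 := by
    rcases mul_eq_zero.mp s4 with h | h
    · exact h
    · exact absurd h (ne_of_gt hd)
  rw [hc0] at s1 s2 hc1 hc2 hu3
  simp only [zero_mul, mul_zero, neg_zero] at s1 s2 hc1 hc2 hu3
  refine ⟨by linarith, by linarith, by linarith, by linarith, by linarith, by linarith⟩

lemma stmt13_poly_integral (c₀ c₁ k : ℝ) :
    ∫ s in (0:ℝ)..k, (c₀ + s * c₁) = k*c₀ + k^2*c₁/2 := by
  have h1 : IntervalIntegrable (fun _ : ℝ => c₀) MeasureTheory.volume 0 k :=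
    intervalIntegrable_const
  have h2 : IntervalIntegrable (fun s : ℝ => s * c₁) MeasureTheory.volume 0 k :=
    (continuous_id.mul continuous_const).intervalIntegrable 0 k
  rw [intervalIntegral.integral_add h1 h2, intervalIntegral.integral_const,
    intervalIntegral.integral_mul_const, integral_id]
  simp [smul_eq_mul]; ring

lemma stmt13_eval (f : E2 →ᵃ[ℝ] ℝ) (P v : E2) (s : ℝ) :
    f (P + s • v) = f P + s * f.linear v := by
  have h : P + s • v = s • v +ᵥ P := by rw [vadd_eq_add, add_comm]
  rw [h, AffineMap.map_vadd, f.linear.map_smul]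
  simp [vadd_eq_add, smul_eq_mul, add_comm]

lemma stmt13_integral (f g : E2 →ᵃ[ℝ] ℝ) (P v : E2) (k : ℝ) (hk : k ∈ Set.Icc (0:ℝ) 1) :
    (∫ s in (0:ℝ)..1, (if s ≤ k then g else f) (P + s • v))
      = (f P + f.linear v/2) + (k*(g P - f P) + k^2*(g.linear v - f.linear v)/2) := by
  have hsplit : ∀ s : ℝ, (if s ≤ k then g else f) (P + s • v)
      = (f P + s * f.linear v)
        + Set.indicator {x : ℝ | x ≤ k}
            (fun s => (g P - f P) + s * (g.linear v - f.linear v)) s := by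
    intro s
    by_cases h : s ≤ k
    · rw [if_pos h, Set.indicator_of_mem (by exact h), stmt13_eval]; ring
    · rw [if_neg h, Set.indicator_of_notMem (by exact h), stmt13_eval]; ring
  have hmeas : MeasurableSet {x : ℝ | x ≤ k} := measurableSet_Iic
  have hcont : Continuous (fun s : ℝ => (g P - f P) + s * (g.linear v - f.linear v)) := by
    continuity
  have hI1 : IntervalIntegrable (fun s : ℝ => f P + s * f.linear v)
      MeasureTheory.volume 0 1 :=
    (continuous_const.add (continuous_id.mul continuous_const)).intervalIntegrable 0 1
  have hI2 : IntervalIntegrable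
      (Set.indicator {x : ℝ | x ≤ k}
        (fun s : ℝ => (g P - f P) + s * (g.linear v - f.linear v)))
      MeasureTheory.volume 0 1 := by
    rw [intervalIntegrable_iff]
    refine MeasureTheory.IntegrableOn.indicator ?_ hmeas
    rw [Set.uIoc_of_le (by norm_num : (0:ℝ) ≤ 1)]
    exact hcont.integrableOn_Icc.mono_set Set.Ioc_subset_Icc_self
  simp only [hsplit]
  rw [intervalIntegral.integral_add hI1 hI2, intervalIntegral.integral_indicator hk,
    stmt13_poly_integral, stmt13_poly_integral]
  ring

end stmt13helpers

open scoped InnerProductSpace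

theorem stmt13 (A₁ A₂ A₃ D Ept nh : EuclideanSpace ℝ (Fin 2))
    (k₁ k₂ βp βm N₁ N₂ N₃ : ℝ)
    (hind : AffineIndependent ℝ ![A₁, A₂, A₃])
    (hk₁ : k₁ ∈ Set.Ioo (0:ℝ) 1) (hk₂ : k₂ ∈ Set.Ioo (0:ℝ) 1)
    (hD : D = A₃ + k₁ • (A₂ - A₃)) (hE : Ept = A₃ + k₂ • (A₁ - A₃))
    (hn : ‖nh‖ = 1) (hperp : ⟪nh, D - Ept⟫_ℝ = 0)
    (hβp : 0 < βp) (hβm : 0 < βm) :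
    ∃! p : (EuclideanSpace ℝ (Fin 2) →ᵃ[ℝ] ℝ) × (EuclideanSpace ℝ (Fin 2) →ᵃ[ℝ] ℝ),
      p.1 D = p.2 D ∧ p.1 Ept = p.2 Ept ∧
      βp * p.1.linear nh = βm * p.2.linear nh ∧
      (∫ s in (0:ℝ)..1, (if s ≤ k₁ then p.2 else p.1) (A₃ + s • (A₂ - A₃))) = N₁ ∧
      (∫ s in (0:ℝ)..1, (if s ≤ k₂ then p.2 else p.1) (A₃ + s • (A₁ - A₃))) = N₂ ∧
      (∫ s in (0:ℝ)..1, p.1 (A₁ + s • (A₂ - A₁))) = N₃ := by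
  obtain ⟨hk₁0, hk₁1⟩ := hk₁
  obtain ⟨hk₂0, hk₂1⟩ := hk₂
  -- basis of edge vectors
  have hli0 := (affineIndependent_iff_linearIndependent_vsub ℝ ![A₁, A₂, A₃] 2).mp hind
  have hinj : Function.Injective
      (fun i : Fin 2 => (⟨i.castSucc, by fin_cases i <;> simp⟩ : {x : Fin 3 // x ≠ 2})) := by
    intro i j h
    have h' : (i.castSucc : Fin 3) = j.castSucc := congrArg Subtype.val h
    exact Fin.castSucc_inj.mp h'
  have hli : LinearIndependent ℝ ![A₁ - A₃, A₂ - A₃] := by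
    have h := hli0.comp _ hinj
    convert h using 1
    funext i
    fin_cases i <;> simp [vsub_eq_sub]
    rfl
  set B : Module.Basis (Fin 2) ℝ (EuclideanSpace ℝ (Fin 2)) :=
    basisOfLinearIndependentOfCardEqFinrank hli (by simp) with hBdef
  have hB : ∀ i, B i = ![A₁ - A₃, A₂ - A₃] i := fun i => by
    simp [hBdef, coe_basisOfLinearIndependentOfCardEqFinrank]
  set x : ℝ := B.repr nh 0 with hxdef
  set y : ℝ := B.repr nh 1 with hydef
  have hnh : nh = x • (A₁ - A₃) + y • (A₂ - A₃) := by
    have h := B.sum_repr nh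
    rw [Fin.sum_univ_two, hB 0, hB 1] at h
    simpa using h.symm
  set m : ℝ := ⟪nh, A₂ - A₃⟫_ℝ with hmdef
  set n : ℝ := ⟪nh, A₁ - A₃⟫_ℝ with hndef
  -- perpendicularity relation
  have hmn : k₁ * m = k₂ * n := by
    have hDE : D - Ept = k₁ • (A₂ - A₃) - k₂ • (A₁ - A₃) := by
      rw [hD, hE]; abel
    rw [hDE, inner_sub_right, real_inner_smul_right, real_inner_smul_right] at hperp
    linarith [hperp]
  -- normalization relation
  have hxy : x * n + y * m = 1 := by
    have h1 : ⟪nh, nh⟫_ℝ = 1 := by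
      rw [real_inner_self_eq_norm_mul_norm, hn]; norm_num
    have h2 : ⟪nh, x • (A₁ - A₃) + y • (A₂ - A₃)⟫_ℝ = 1 := by rw [← hnh]; exact h1
    rw [inner_add_right, real_inner_smul_right, real_inner_smul_right] at h2
    linarith [h2]
  -- vertex-value formulas
  have hlinv : ∀ f : EuclideanSpace ℝ (Fin 2) →ᵃ[ℝ] ℝ, ∀ Q R : EuclideanSpace ℝ (Fin 2),
      f.linear (Q - R) = f Q - f R := by
    intro f Q R
    have h := f.linearMap_vsub Q R
    simpa [vsub_eq_sub] using h
  have hlinnh : ∀ f : EuclideanSpace ℝ (Fin 2) →ᵃ[ℝ] ℝ,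
      f.linear nh = x * (f A₁ - f A₃) + y * (f A₂ - f A₃) := by
    intro f
    rw [hnh, map_add, f.linear.map_smul, f.linear.map_smul, hlinv f A₁ A₃, hlinv f A₂ A₃]
    simp [smul_eq_mul]
  -- construction of affine maps with prescribed vertex values
  have hmk : ∀ w₁ w₂ w₃ : ℝ, ∃ f : EuclideanSpace ℝ (Fin 2) →ᵃ[ℝ] ℝ,
      f A₁ = w₁ ∧ f A₂ = w₂ ∧ f A₃ = w₃ := by
    intro w₁ w₂ w₃
    set L : EuclideanSpace ℝ (Fin 2) →ₗ[ℝ] ℝ := B.constr ℝ ![w₁ - w₃, w₂ - w₃] with hLdef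
    refine ⟨⟨fun X => w₃ + L (X - A₃), L, ?_⟩, ?_, ?_, ?_⟩
    · intro p v
      simp only [vadd_eq_add]
      have : v + p - A₃ = v + (p - A₃) := by abel
      rw [this, map_add]
      ring
    · show w₃ + L (A₁ - A₃) = w₁
      have : L (A₁ - A₃) = w₁ - w₃ := by
        have h0 : (A₁ - A₃) = B 0 := by rw [hB 0]; simp
        rw [h0, hLdef, B.constr_basis]; simp
      rw [this]; ring
    · show w₃ + L (A₂ - A₃) = w₂
      have : L (A₂ - A₃) = w₂ - w₃ := by
        have h1 : (A₂ - A₃) = B 1 := by rw [hB 1]; simp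
        rw [h1, hLdef, B.constr_basis]; simp
      rw [this]; ring
    · show w₃ + L (A₃ - A₃) = w₃
      simp
  -- extensionality from vertex values
  have hext : ∀ f g : EuclideanSpace ℝ (Fin 2) →ᵃ[ℝ] ℝ,
      f A₁ = g A₁ → f A₂ = g A₂ → f A₃ = g A₃ → f = g := by
    intro f g e1 e2 e3
    have hl : f.linear = g.linear := by
      apply B.ext
      intro i
      fin_cases i <;> simp [hB, hlinv f, hlinv g, e1, e2, e3]
    ext X
    have hX : X = (X - A₃) +ᵥ A₃ := by simp [vadd_eq_add]
    rw [hX, AffineMap.map_vadd, AffineMap.map_vadd, hl, e3]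
  -- rewriting the conditions in terms of vertex values
  have hkIcc₁ : k₁ ∈ Set.Icc (0:ℝ) 1 := ⟨hk₁0.le, hk₁1.le⟩
  have hkIcc₂ : k₂ ∈ Set.Icc (0:ℝ) 1 := ⟨hk₂0.le, hk₂1.le⟩
  have hDval : ∀ f : EuclideanSpace ℝ (Fin 2) →ᵃ[ℝ] ℝ,
      f D = f A₃ + k₁ * (f A₂ - f A₃) := by
    intro f; rw [hD, stmt13_eval, hlinv]
  have hEval : ∀ f : EuclideanSpace ℝ (Fin 2) →ᵃ[ℝ] ℝ,
      f Ept = f A₃ + k₂ * (f A₁ - f A₃) := by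
    intro f; rw [hE, stmt13_eval, hlinv]
  have hI1 : ∀ f g : EuclideanSpace ℝ (Fin 2) →ᵃ[ℝ] ℝ,
      (∫ s in (0:ℝ)..1, (if s ≤ k₁ then g else f) (A₃ + s • (A₂ - A₃)))
        = f A₃ + (f A₂ - f A₃)/2 + (k₁*(g A₃ - f A₃)
          + k₁^2*((g A₂ - g A₃) - (f A₂ - f A₃))/2) := by
    intro f g
    rw [stmt13_integral f g A₃ (A₂ - A₃) k₁ hkIcc₁, hlinv, hlinv]
  have hI2 : ∀ f g : EuclideanSpace ℝ (Fin 2) →ᵃ[ℝ] ℝ,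
      (∫ s in (0:ℝ)..1, (if s ≤ k₂ then g else f) (A₃ + s • (A₁ - A₃)))
        = f A₃ + (f A₁ - f A₃)/2 + (k₂*(g A₃ - f A₃)
          + k₂^2*((g A₁ - g A₃) - (f A₁ - f A₃))/2) := by
    intro f g
    rw [stmt13_integral f g A₃ (A₁ - A₃) k₂ hkIcc₂, hlinv, hlinv]
  have hI3 : ∀ f : EuclideanSpace ℝ (Fin 2) →ᵃ[ℝ] ℝ,
      (∫ s in (0:ℝ)..1, f (A₁ + s • (A₂ - A₁))) = f A₁ + (f A₂ - f A₁)/2 := by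
    intro f
    have h : ∀ s : ℝ, f (A₁ + s • (A₂ - A₁)) = f A₁ + s * (f A₂ - f A₁) := by
      intro s; rw [stmt13_eval, hlinv]
    simp only [h]
    rw [stmt13_poly_integral]
    ring
  -- existence
  obtain ⟨a₁, a₂, a₃, b₁, b₂, b₃, e1, e2, e3, e4, e5, e6⟩ :=
    stmt13_aux_exist k₁ k₂ βp βm x y m n N₁ N₂ N₃ hk₁0 hk₁1 hk₂0 hk₂1 hβp hβm hmn hxy
  obtain ⟨f₀, hf1, hf2, hf3⟩ := hmk a₁ a₂ a₃
  obtain ⟨g₀, hg1, hg2, hg3⟩ := hmk b₁ b₂ b₃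
  refine ⟨(f₀, g₀), ⟨?_, ?_, ?_, ?_, ?_, ?_⟩, ?_⟩
  · rw [hDval, hDval]
    simp only [hf1, hf2, hf3, hg1, hg2, hg3]
    exact e1
  · rw [hEval, hEval]
    simp only [hf1, hf2, hf3, hg1, hg2, hg3]
    exact e2
  · show βp * f₀.linear nh = βm * g₀.linear nh
    rw [hlinnh, hlinnh]
    simp only [hf1, hf2, hf3, hg1, hg2, hg3]
    linear_combination e3
  · show (∫ s in (0:ℝ)..1, (if s ≤ k₁ then g₀ else f₀) (A₃ + s • (A₂ - A₃))) = N₁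
    rw [hI1]
    simp only [hf1, hf2, hf3, hg1, hg2, hg3]
    linear_combination e4
  · show (∫ s in (0:ℝ)..1, (if s ≤ k₂ then g₀ else f₀) (A₃ + s • (A₁ - A₃))) = N₂
    rw [hI2]
    simp only [hf1, hf2, hf3, hg1, hg2, hg3]
    linear_combination e5
  · show (∫ s in (0:ℝ)..1, f₀ (A₁ + s • (A₂ - A₁))) = N₃
    rw [hI3]
    simp only [hf1, hf2]
    linear_combination e6
  -- uniqueness
  · rintro ⟨f, g⟩ ⟨c1, c2, c3, c4, c5, c6⟩
    rw [hDval, hDval] at c1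
    rw [hEval, hEval] at c2
    rw [hlinnh, hlinnh] at c3
    rw [hI1] at c4
    rw [hI2] at c5
    rw [hI3] at c6
    -- differences satisfy the homogeneous system
    obtain ⟨z1, z2, z3, z4, z5, z6⟩ :=
      stmt13_aux_unique k₁ k₂ βp βm x y m n
        (f A₁ - f₀ A₁) (f A₂ - f₀ A₂) (f A₃ - f₀ A₃)
        (g A₁ - g₀ A₁) (g A₂ - g₀ A₂) (g A₃ - g₀ A₃)
        hk₁0 hk₁1 hk₂0 hk₂1 hβp hβm hmn hxy
        (by
          have d1 : f₀ A₃ + k₁ * (f₀ A₂ - f₀ A₃) = g₀ A₃ + k₁ * (g₀ A₂ - g₀ A₃) := by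
            simp only [hf1, hf2, hf3, hg1, hg2, hg3]; exact e1
          linear_combination c1 - d1)
        (by
          have d2 : f₀ A₃ + k₂ * (f₀ A₁ - f₀ A₃) = g₀ A₃ + k₂ * (g₀ A₁ - g₀ A₃) := by
            simp only [hf1, hf2, hf3, hg1, hg2, hg3]; exact e2
          linear_combination c2 - d2)
        (by
          have d3 : βp * (x * (f₀ A₁ - f₀ A₃) + y * (f₀ A₂ - f₀ A₃))
              = βm * (x * (g₀ A₁ - g₀ A₃) + y * (g₀ A₂ - g₀ A₃)) := by
            simp only [hf1, hf2, hf3, hg1, hg2, hg3]; linear_combination e3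
          linear_combination c3 - d3)
        (by
          have d4 : f₀ A₃ + (f₀ A₂ - f₀ A₃)/2 + (k₁*(g₀ A₃ - f₀ A₃)
              + k₁^2*((g₀ A₂ - g₀ A₃) - (f₀ A₂ - f₀ A₃))/2) = N₁ := by
            simp only [hf1, hf2, hf3, hg1, hg2, hg3]
            linear_combination e4
          linear_combination c4 - d4)
        (by
          have d5 : f₀ A₃ + (f₀ A₁ - f₀ A₃)/2 + (k₂*(g₀ A₃ - f₀ A₃)
              + k₂^2*((g₀ A₁ - g₀ A₃) - (f₀ A₁ - f₀ A₃))/2) = N₂ := by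
            simp only [hf1, hf2, hf3, hg1, hg2, hg3]
            linear_combination e5
          linear_combination c5 - d5)
        (by
          have d6 : f₀ A₁ + (f₀ A₂ - f₀ A₁)/2 = N₃ := by
            simp only [hf1, hf2]; linear_combination e6
          linear_combination c6 - d6)
    have hf : f = f₀ := hext f f₀ (by linarith) (by linarith) (by linarith)
    have hg : g = g₀ := hext g g₀ (by linarith) (by linarith) (by linarith)
    exact Prod.ext hf hg
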